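/- If u : (0,δ)×ℝⁿ → ℝ^d is twice continuously differentiable and satisfies the second-order system, then the functions U₋₁ := u, U₀ := Du − α·u, and U_a := t·∂_a u (a = 1,…,n) satisfy the first-order system (E₋₁), (E₀), (E_a). -/

import Mathlib

/-- The Fuchsian time derivative `D u = t·∂_t u` for functions of `(t, x) ∈ ℝ × ℝⁿ`. -/
noncomputable def Dop {n d : ℕ} (u : ℝ × (Fin n → ℝ) → Fin d → ℝ)
    (p : ℝ × (Fin n → ℝ)) : Fin d → ℝ :=
  p.1 • deriv (fun s => u (s, p.2)) p.1

/-- The spatial partial derivative `∂_a u` for functions of `(t, x) ∈ ℝ × ℝⁿ`. -/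
noncomputable def pd {n d : ℕ} (a : Fin n) (u : ℝ × (Fin n → ℝ) → Fin d → ℝ)
    (p : ℝ × (Fin n → ℝ)) : Fin d → ℝ :=
  deriv (fun s => u (p.1, Function.update p.2 a s)) (p.2 a)

section aux

variable {n d : ℕ}

/-- Slice derivative in the time direction. -/
lemma hasDerivAt_fst_slice {v : ℝ × (Fin n → ℝ) → Fin d → ℝ}
    {L : ℝ × (Fin n → ℝ) →L[ℝ] Fin d → ℝ} {p : ℝ × (Fin n → ℝ)}
    (hv : HasFDerivAt v L p) :
    HasDerivAt (fun s => v (s, p.2)) (L (1, 0)) p.1 := by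
  have h1 : HasDerivAt (fun s : ℝ => (s, p.2)) ((1 : ℝ), (0 : Fin n → ℝ)) p.1 :=
    (hasDerivAt_id p.1).prodMk (hasDerivAt_const _ _)
  exact hv.comp_hasDerivAt p.1 h1

/-- Slice derivative in the `a`-th spatial direction. -/
lemma hasDerivAt_upd_slice {v : ℝ × (Fin n → ℝ) → Fin d → ℝ}
    {L : ℝ × (Fin n → ℝ) →L[ℝ] Fin d → ℝ} {p : ℝ × (Fin n → ℝ)} (a : Fin n)
    (hv : HasFDerivAt v L p) :
    HasDerivAt (fun s => v (p.1, Function.update p.2 a s)) (L (0, Pi.single a 1)) (p.2 a) := by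
  have h0 : (fun s : ℝ => Function.update p.2 a s)
      = fun s => Function.update p.2 a 0 + s • Pi.single a (1 : ℝ) := by
    funext s i
    rcases eq_or_ne i a with rfl | hi
    · simp
    · simp [Function.update_of_ne hi, Pi.single_eq_of_ne hi]
  have h1 : HasDerivAt (fun s : ℝ => Function.update p.2 a s) (Pi.single a (1 : ℝ)) (p.2 a) := by
    rw [h0]
    simpa using
      (((hasDerivAt_id (p.2 a)).smul_const (Pi.single a (1 : ℝ)))).const_add
        (Function.update p.2 a 0)
  have h2 : HasDerivAt (fun s : ℝ => (p.1, Function.update p.2 a s))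
      ((0 : ℝ), Pi.single a (1 : ℝ)) (p.2 a) :=
    (hasDerivAt_const _ _).prodMk h1
  have hp : (p.1, Function.update p.2 a (p.2 a)) = p := by
    rw [Function.update_eq_self]
  rw [← hp] at hv
  exact hv.comp_hasDerivAt (p.2 a) h2

end aux

/-- Appendix A, forward direction of the first-order reduction: if `u` is a C² solution of
the second-order system
`D²u − 2·Σ_a G⁰ᵃ·t∂_a(Du) − Σ_{a,b} Gᵃᵇ·t²∂_a∂_b u − Du = h`
on `(0,δ) × ℝⁿ`, then `U₋₁ := u`, `U₀ := Du − α·u`, `U_a := t·∂_a u` satisfy the associated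
first-order system (E₋₁), (E₀), (E_a). -/
theorem stmt_9 (n d : ℕ) (hn : 0 < n) (hd : 0 < d) (δ α : ℝ) (hδ : 0 < δ)
    (G0 : Fin n → ℝ × (Fin n → ℝ) → ℝ)
    (G : Fin n → Fin n → ℝ × (Fin n → ℝ) → ℝ)
    (hGsymm : ∀ a b : Fin n, G a b = G b a)
    (h u : ℝ × (Fin n → ℝ) → Fin d → ℝ)
    (hu : ContDiffOn ℝ 2 u (Set.Ioo (0 : ℝ) δ ×ˢ (Set.univ : Set (Fin n → ℝ))))
    (hsecond : ∀ p ∈ Set.Ioo (0 : ℝ) δ ×ˢ (Set.univ : Set (Fin n → ℝ)),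
      Dop (Dop u) p - ∑ a : Fin n, (2 * G0 a p) • (p.1 • pd a (Dop u) p)
        - ∑ a : Fin n, ∑ b : Fin n, G a b p • ((p.1) ^ 2 • pd a (pd b u) p)
        - Dop u p = h p) :
    (let Um1 : ℝ × (Fin n → ℝ) → Fin d → ℝ := u
     let U0 : ℝ × (Fin n → ℝ) → Fin d → ℝ := fun q => Dop u q - α • u q
     let UA : Fin n → ℝ × (Fin n → ℝ) → Fin d → ℝ := fun a q => q.1 • pd a u q
     ∀ p ∈ Set.Ioo (0 : ℝ) δ ×ˢ (Set.univ : Set (Fin n → ℝ)),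
       (Dop Um1 p - α • Um1 p - U0 p = 0) ∧
       (Dop U0 p - ∑ a : Fin n, (2 * G0 a p) • (p.1 • pd a U0 p)
           - ∑ a : Fin n, ∑ b : Fin n, G a b p • (p.1 • pd a (UA b) p)
           - (α * (1 - α)) • Um1 p + (α - 1) • U0 p
         = h p + ∑ a : Fin n, (2 * α * G0 a p) • UA a p) ∧
       (∀ a : Fin n,
         ∑ b : Fin n, G a b p •
           (Dop (UA b) p - p.1 • pd b U0 p - (1 + α) • UA b p) = 0)) := by
  intro Um1 U0 UA p hp
  set S : Set (ℝ × (Fin n → ℝ)) := Set.Ioo (0 : ℝ) δ ×ˢ (Set.univ : Set (Fin n → ℝ)) with hSdef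
  have hS : IsOpen S := isOpen_Ioo.prod isOpen_univ
  have hmemS : ∀ q : ℝ × (Fin n → ℝ), q.1 ∈ Set.Ioo (0 : ℝ) δ → q ∈ S := fun q hq =>
    ⟨hq, trivial⟩
  have hp1 : p.1 ∈ Set.Ioo (0 : ℝ) δ := hp.1
  have hCD : ∀ q ∈ S, ContDiffAt ℝ 2 u q := fun q hq => hu.contDiffAt (hS.mem_nhds hq)
  have hdiff : ∀ q ∈ S, DifferentiableAt ℝ u q := fun q hq =>
    (hCD q hq).differentiableAt (by norm_num)
  have hF1 : DifferentiableAt ℝ (fderiv ℝ u) p :=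
    ((hCD p hp).fderiv_right (by norm_num)).differentiableAt one_ne_zero
  have hsymm := (hCD p hp).isSymmSndFDerivAt (by simp)
  set Fp := fderiv ℝ u p with hFpdef
  set F2p := fderiv ℝ (fderiv ℝ u) p with hF2pdef
  -- generic first-order formulas on S
  have eqDop : ∀ q ∈ S, Dop u q = q.1 • fderiv ℝ u q (1, 0) := fun q hq => by
    rw [show Dop u q = q.1 • deriv (fun s => u (s, q.2)) q.1 from rfl,
      (hasDerivAt_fst_slice ((hdiff q hq).hasFDerivAt)).deriv]
  have eqpd : ∀ (b : Fin n), ∀ q ∈ S, pd b u q = fderiv ℝ u q (0, Pi.single b 1) :=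
    fun b q hq => by
      rw [show pd b u q = deriv (fun s => u (q.1, Function.update q.2 b s)) (q.2 b) from rfl,
        (hasDerivAt_upd_slice b ((hdiff q hq).hasFDerivAt)).deriv]
  -- derivative of the fderiv applied to a fixed vector
  have hApp : ∀ w : ℝ × (Fin n → ℝ), HasFDerivAt (fun q => fderiv ℝ u q w)
      ((ContinuousLinearMap.apply ℝ (Fin d → ℝ) w).comp F2p) p := fun w =>
    (ContinuousLinearMap.apply ℝ (Fin d → ℝ) w).hasFDerivAt.comp p hF1.hasFDerivAt
  have B1 : ∀ w, HasDerivAt (fun s => fderiv ℝ u (s, p.2) w) (F2p (1, 0) w) p.1 := fun w => by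
    simpa using hasDerivAt_fst_slice (hApp w)
  have B2 : ∀ (a : Fin n) w,
      HasDerivAt (fun s => fderiv ℝ u (p.1, Function.update p.2 a s) w)
        (F2p (0, Pi.single a 1) w) (p.2 a) := fun a w => by
    simpa using hasDerivAt_upd_slice a (hApp w)
  have A1 : HasDerivAt (fun s => u (s, p.2)) (Fp (1, 0)) p.1 :=
    hasDerivAt_fst_slice (hdiff p hp).hasFDerivAt
  have A2 : ∀ a : Fin n, HasDerivAt (fun s => u (p.1, Function.update p.2 a s))
      (Fp (0, Pi.single a 1)) (p.2 a) := fun a =>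
    hasDerivAt_upd_slice a (hdiff p hp).hasFDerivAt
  have hev : ∀ᶠ s in nhds p.1, (s, p.2) ∈ S := by
    have hc : ContinuousAt (fun s : ℝ => (s, p.2)) p.1 :=
      (continuous_id.prodMk continuous_const).continuousAt
    exact hc.preimage_mem_nhds (hS.mem_nhds hp)
  -- the individual identities
  have eq1 : Dop u p = p.1 • Fp (1, 0) := eqDop p hp
  have eq2 : ∀ a, pd a u p = Fp (0, Pi.single a 1) := fun a => eqpd a p hp
  have eq3 : Dop (Dop u) p = p.1 • (p.1 • F2p (1, 0) (1, 0) + (1 : ℝ) • Fp (1, 0)) := by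
    have hE : (fun s => Dop u (s, p.2)) =ᶠ[nhds p.1]
        fun s => s • fderiv ℝ u (s, p.2) (1, 0) := by
      filter_upwards [hev] with s hs
      exact eqDop _ hs
    have hD : HasDerivAt (fun s => s • fderiv ℝ u (s, p.2) (1, 0))
        (p.1 • F2p (1, 0) (1, 0) + (1 : ℝ) • Fp (1, 0)) p.1 :=
      (hasDerivAt_id p.1).smul (B1 (1, 0))
    rw [show Dop (Dop u) p = p.1 • deriv (fun s => Dop u (s, p.2)) p.1 from rfl,
      (hD.congr_of_eventuallyEq hE).deriv]
  have eq4 : ∀ a, pd a (Dop u) p = p.1 • F2p (0, Pi.single a 1) (1, 0) := by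
    intro a
    have hfun : (fun s => Dop u (p.1, Function.update p.2 a s))
        = fun s => p.1 • fderiv ℝ u (p.1, Function.update p.2 a s) (1, 0) := by
      funext s
      exact eqDop _ (hmemS _ hp1)
    rw [show pd a (Dop u) p = deriv (fun s => Dop u (p.1, Function.update p.2 a s)) (p.2 a)
        from rfl, hfun]
    exact ((B2 a (1, 0)).const_smul p.1).deriv
  have eq5 : ∀ a b, pd a (pd b u) p = F2p (0, Pi.single a 1) (0, Pi.single b 1) := by
    intro a b
    have hfun : (fun s => pd b u (p.1, Function.update p.2 a s))
        = fun s => fderiv ℝ u (p.1, Function.update p.2 a s) (0, Pi.single b 1) := by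
      funext s
      exact eqpd b _ (hmemS _ hp1)
    rw [show pd a (pd b u) p = deriv (fun s => pd b u (p.1, Function.update p.2 a s)) (p.2 a)
        from rfl, hfun, (B2 a (0, Pi.single b 1)).deriv]
  have hU0p : U0 p = p.1 • Fp (1, 0) - α • u p := by
    show Dop u p - α • u p = _
    rw [eq1]
  have hUAp : ∀ a, UA a p = p.1 • Fp (0, Pi.single a 1) := by
    intro a
    show p.1 • pd a u p = _
    rw [eq2 a]
  have eqU0D : Dop U0 p = p.1 • ((p.1 • F2p (1, 0) (1, 0) + (1 : ℝ) • Fp (1, 0))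
      - α • Fp (1, 0)) := by
    have hE : (fun s => U0 (s, p.2)) =ᶠ[nhds p.1]
        fun s => s • fderiv ℝ u (s, p.2) (1, 0) - α • u (s, p.2) := by
      filter_upwards [hev] with s hs
      show Dop u (s, p.2) - α • u (s, p.2) = _
      rw [eqDop _ hs]
    have hD := ((hasDerivAt_id p.1).smul (B1 (1, 0))).sub (A1.const_smul α)
    rw [show Dop U0 p = p.1 • deriv (fun s => U0 (s, p.2)) p.1 from rfl,
      (hD.congr_of_eventuallyEq hE).deriv]
    simp [hFpdef]
  have eqU0pd : ∀ a, pd a U0 p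
      = p.1 • F2p (0, Pi.single a 1) (1, 0) - α • Fp (0, Pi.single a 1) := by
    intro a
    have hfun : (fun s => U0 (p.1, Function.update p.2 a s))
        = fun s => p.1 • fderiv ℝ u (p.1, Function.update p.2 a s) (1, 0)
            - α • u (p.1, Function.update p.2 a s) := by
      funext s
      show Dop u _ - α • u _ = _
      rw [eqDop (p.1, Function.update p.2 a s) (hmemS _ hp1)]
    have hD := ((B2 a (1, 0)).const_smul p.1).sub ((A2 a).const_smul α)
    rw [show pd a U0 p = deriv (fun s => U0 (p.1, Function.update p.2 a s)) (p.2 a) from rfl,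
      hfun]
    exact hD.deriv
  have eqUAD : ∀ b, Dop (UA b) p
      = p.1 • (p.1 • F2p (1, 0) (0, Pi.single b 1) + (1 : ℝ) • Fp (0, Pi.single b 1)) := by
    intro b
    have hE : (fun s => UA b (s, p.2)) =ᶠ[nhds p.1]
        fun s => s • fderiv ℝ u (s, p.2) (0, Pi.single b 1) := by
      filter_upwards [hev] with s hs
      show (s : ℝ) • pd b u (s, p.2) = _
      rw [eqpd b _ hs]
    have hD := (hasDerivAt_id p.1).smul (B1 (0, Pi.single b 1))
    have hD' := hD.congr_of_eventuallyEq hE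
    rw [show Dop (UA b) p = p.1 • deriv (fun s => UA b (s, p.2)) p.1 from rfl, hD'.deriv]
    simp [hFpdef]
  have eqUApd : ∀ a b, pd a (UA b) p
      = p.1 • F2p (0, Pi.single a 1) (0, Pi.single b 1) := by
    intro a b
    have hfun : (fun s => UA b (p.1, Function.update p.2 a s))
        = fun s => p.1 • fderiv ℝ u (p.1, Function.update p.2 a s) (0, Pi.single b 1) := by
      funext s
      show (p.1 : ℝ) • pd b u _ = _
      rw [eqpd b (p.1, Function.update p.2 a s) (hmemS _ hp1)]
    rw [show pd a (UA b) p = deriv (fun s => UA b (p.1, Function.update p.2 a s)) (p.2 a)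
        from rfl, hfun]
    exact ((B2 a (0, Pi.single b 1)).const_smul p.1).deriv
  have hsec := hsecond p hp
  simp only [eq1, eq3, eq4, eq5] at hsec
  refine ⟨?_, ?_, ?_⟩
  · show Dop u p - α • u p - U0 p = 0
    show Dop u p - α • u p - (Dop u p - α • u p) = 0
    abel
  · -- E₀
    have split1 : ∑ a : Fin n, (2 * G0 a p) • (p.1 • pd a U0 p)
        = (∑ a : Fin n, (2 * G0 a p) • (p.1 • (p.1 • F2p (0, Pi.single a 1) (1, 0))))
          - ∑ a : Fin n, (2 * α * G0 a p) • (p.1 • Fp (0, Pi.single a 1)) := by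
      rw [← Finset.sum_sub_distrib]
      refine Finset.sum_congr rfl fun a _ => ?_
      rw [eqU0pd a]
      module
    have split2 : ∑ a : Fin n, ∑ b : Fin n, G a b p • (p.1 • pd a (UA b) p)
        = ∑ a : Fin n, ∑ b : Fin n,
            G a b p • (p.1 ^ 2 • F2p (0, Pi.single a 1) (0, Pi.single b 1)) := by
      refine Finset.sum_congr rfl fun a _ => Finset.sum_congr rfl fun b _ => ?_
      rw [eqUApd a b]
      module
    have split3 : ∑ a : Fin n, (2 * G0 a p) • (p.1 • (p.1 • F2p (0, Pi.single a 1) (1, 0)))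
        = ∑ a : Fin n, (2 * G0 a p) • (p.1 • p.1 • F2p (0, Pi.single a 1) (1, 0)) := by
      rfl
    have hUm1 : Um1 p = u p := rfl
    rw [eqU0D, split1, split2, hU0p, hUm1, ← hsec]
    simp only [hUAp]
    module
  · -- E_a
    intro a
    refine Finset.sum_eq_zero fun b _ => ?_
    rw [eqUAD b, eqU0pd b, hUAp b, hsymm (0, Pi.single b 1) (1, 0)]
    module
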